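/- Cauchy estimate for the dyadic Euler approximations: fix T > 0, n ≥ 1, continuous f₁,…,f_n : [0,T] → ℝ with f_i(0) ≥ 0 for each i, and K ≥ 0, with initial velocity v = 0. Then for all positive integers l < m, sup_{t ∈ [0,T]} |I^{(2^{-l})}(t) − I^{(2^{-m})}(t)| ≤ ((2 + K) ‖f‖_{[0,T]} / n) · 2^{-l} · exp(K T). -/

import Mathlib

open Set

def IsEulerApprox (T : ℝ) (n : ℕ) (f : Fin n → ℝ → ℝ) (K ε : ℝ)
    (J : ℝ → ℝ) : Prop :=
  (∀ t ∈ Set.Icc 0 (min ε T), J t = 0) ∧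
  ∀ M : ℕ, 1 ≤ M →
    ∀ t ∈ Set.Icc ((M : ℝ) * ε) (((M : ℝ) + 1) * ε) ∩ Set.Icc (0:ℝ) T,
      J t = J ((M : ℝ) * ε) +
        (K / (n : ℝ)) *
          (∑ i, sSup ((fun u => max (-(f i u + J u)) 0) '' Set.Icc 0 ((M : ℝ) * ε))) *
          (t - (M : ℝ) * ε)

private def euGron (a b : ℝ) (c : ℕ → ℝ) : ℕ → ℝ
  | 0 => 0
  | k + 1 => a * euGron a b c k + b * c k

private lemma euGron_nonneg {a b : ℝ} {c : ℕ → ℝ} (ha : 1 ≤ a) (hb : 0 ≤ b)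
    (hc : ∀ j, 0 ≤ c j) : ∀ k, 0 ≤ euGron a b c k := by
  intro k
  induction k with
  | zero => simp [euGron]
  | succ k ih =>
    have h0 : (0:ℝ) ≤ a := le_trans zero_le_one ha
    simp only [euGron]
    exact add_nonneg (mul_nonneg h0 ih) (mul_nonneg hb (hc k))

private lemma euGron_mono {a b : ℝ} {c : ℕ → ℝ} (ha : 1 ≤ a) (hb : 0 ≤ b)
    (hc : ∀ j, 0 ≤ c j) (k : ℕ) : euGron a b c k ≤ euGron a b c (k + 1) := by
  have h0 := euGron_nonneg ha hb hc k
  have h1 := mul_nonneg hb (hc k)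
  simp only [euGron]
  nlinarith

private lemma euGron_le {a b : ℝ} {c : ℕ → ℝ} (ha : 1 ≤ a) (hb : 0 ≤ b)
    (hc : ∀ j, 0 ≤ c j) : ∀ k, euGron a b c (k + 1) ≤
      a ^ k * (b * ∑ j ∈ Finset.range (k + 1), c j) := by
  intro k
  induction k with
  | zero => simp [euGron]
  | succ k ih =>
    have h0 : (0:ℝ) ≤ a := le_trans zero_le_one ha
    have hpow : (1:ℝ) ≤ a ^ (k+1) := one_le_pow₀ ha
    have hbc : 0 ≤ b * c (k+1) := mul_nonneg hb (hc (k+1))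
    calc euGron a b c (k+2) = a * euGron a b c (k+1) + b * c (k+1) := rfl
      _ ≤ a * (a ^ k * (b * ∑ j ∈ Finset.range (k+1), c j)) + b * c (k+1) := by
          nlinarith [mul_le_mul_of_nonneg_left ih h0]
      _ = a ^ (k+1) * (b * ∑ j ∈ Finset.range (k+1), c j) + b * c (k+1) := by ring
      _ ≤ a ^ (k+1) * (b * ∑ j ∈ Finset.range (k+1), c j) + a ^ (k+1) * (b * c (k+1)) := by
          nlinarith
      _ = a ^ (k+1) * (b * ∑ j ∈ Finset.range (k+2), c j) := by
          rw [show k+2 = (k+1)+1 from rfl, Finset.sum_range_succ _ (k+1)]; ring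

private lemma eulerApprox_nonneg {T : ℝ} (hT : 0 < T) {n : ℕ} {f : Fin n → ℝ → ℝ}
    {K ε : ℝ} (hK : 0 ≤ K) (hε : 0 < ε) {J : ℝ → ℝ}
    (hJ : IsEulerApprox T n f K ε J) :
    ∀ t, 0 ≤ t → t ≤ T → 0 ≤ J t := by
  have main : ∀ M : ℕ, ∀ t, 0 ≤ t → t ≤ ((M:ℝ) + 1) * ε → t ≤ T → 0 ≤ J t := by
    intro M
    induction M with
    | zero =>
      intro t ht0 htε htT
      have hmem : t ∈ Icc 0 (min ε T) := ⟨ht0, le_min (by norm_num at htε; linarith) htT⟩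
      rw [hJ.1 t hmem]
    | succ M ih =>
      intro t ht0 htε htT
      by_cases h : t ≤ ((M:ℝ) + 1) * ε
      · exact ih t ht0 h htT
      · push_neg at h
        have hM1 : 1 ≤ M + 1 := Nat.le_add_left 1 M
        have hmem : t ∈ Icc (((M+1:ℕ):ℝ) * ε) (((((M+1:ℕ)):ℝ) + 1) * ε) ∩ Icc (0:ℝ) T := by
          refine ⟨⟨?_, ?_⟩, ht0, htT⟩ <;> push_cast <;> push_cast at htε <;> linarith
        have heq := hJ.2 (M+1) hM1 t hmem
        have hJM : 0 ≤ J (((M+1:ℕ):ℝ) * ε) := by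
          apply ih ((((M+1:ℕ)):ℝ) * ε) (by positivity) (by push_cast; nlinarith) ?_
          push_cast; push_cast at h; linarith
        have hslope : 0 ≤ K / (n : ℝ) *
            (∑ i, sSup ((fun u => max (-(f i u + J u)) 0) '' Set.Icc 0 (((M+1:ℕ):ℝ) * ε))) := by
          apply mul_nonneg (div_nonneg hK (Nat.cast_nonneg n))
          apply Finset.sum_nonneg
          intro i _
          apply Real.sSup_nonneg
          rintro x ⟨u, _, rfl⟩
          exact le_max_right _ _
        rw [heq]
        have ht' : 0 ≤ t - ((M+1:ℕ):ℝ) * ε := by push_cast; push_cast at h; linarith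
        nlinarith
  intro t ht0 htT
  obtain ⟨M, hM⟩ := exists_nat_ge (t / ε)
  have : t ≤ (M:ℝ) * ε := by
    have := (div_le_iff₀ hε).mp hM
    linarith
  exact main M t ht0 (by nlinarith) htT
set_option maxHeartbeats 1000000 in
theorem stmt_14 (T : ℝ) (hT : 0 < T) (n : ℕ) (hn : 1 ≤ n)
    (f : Fin n → ℝ → ℝ) (hf : ∀ i, ContinuousOn (f i) (Set.Icc 0 T))
    (hf0 : ∀ i, 0 ≤ f i 0) (K : ℝ) (hK : 0 ≤ K)
    (l m : ℕ) (hl : 1 ≤ l) (hlm : l < m)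
    (Jl Jm : ℝ → ℝ)
    (hJl : IsEulerApprox T n f K ((2 : ℝ) ^ (-(l : ℤ))) Jl)
    (hJm : IsEulerApprox T n f K ((2 : ℝ) ^ (-(m : ℤ))) Jm) :
    sSup ((fun t => |Jl t - Jm t|) '' Set.Icc 0 T) ≤
      ((2 + K) * (∑ i, sSup ((fun t => |f i t|) '' Set.Icc 0 T)) / (n : ℝ)) *
        (2 : ℝ) ^ (-(l : ℤ)) * Real.exp (K * T) := by
  set ε : ℝ := (2:ℝ) ^ (-(l:ℤ)) with hεdef
  set δ : ℝ := (2:ℝ) ^ (-(m:ℤ)) with hδdef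
  have hε : 0 < ε := by rw [hεdef]; positivity
  have hδ : 0 < δ := by rw [hδdef]; positivity
  set r : ℕ := 2 ^ (m - l) with hrdef
  have hr1 : 1 ≤ r := Nat.one_le_two_pow
  have hrδ : (r : ℝ) * δ = ε := by
    rw [hrdef, hεdef, hδdef]
    push_cast
    rw [← zpow_natCast (2:ℝ) (m - l), ← zpow_add₀ (by norm_num : (2:ℝ) ≠ 0)]
    congr 1
    omega
  have hn0 : (0:ℝ) < (n:ℝ) := by exact_mod_cast hn
  have hKn : 0 ≤ K / (n:ℝ) := div_nonneg hK hn0.le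
  -- sup norms of f
  set Fi : Fin n → ℝ := fun i => sSup ((fun t => |f i t|) '' Icc 0 T) with hFidef
  set F : ℝ := ∑ i, Fi i with hFdef
  have hFib : ∀ i, BddAbove ((fun t => |f i t|) '' Icc 0 T) :=
    fun i => isCompact_Icc.bddAbove_image ((hf i).abs)
  have hfle : ∀ i, ∀ u, 0 ≤ u → u ≤ T → |f i u| ≤ Fi i :=
    fun i u h0 h1 => le_csSup (hFib i) ⟨u, ⟨h0, h1⟩, rfl⟩
  have hFi0 : ∀ i, 0 ≤ Fi i := fun i => le_trans (abs_nonneg (f i 0)) (hfle i 0 le_rfl hT.le)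
  have hF0 : 0 ≤ F := Finset.sum_nonneg fun i _ => hFi0 i
  -- nonnegativity of the approximations
  have hJlnn := eulerApprox_nonneg hT hK hε hJl
  have hJmnn := eulerApprox_nonneg hT hK hδ hJm
  -- pointwise bound of the running maximum integrand
  have gbound : ∀ (J : ℝ → ℝ), (∀ t, 0 ≤ t → t ≤ T → 0 ≤ J t) →
      ∀ i, ∀ u, 0 ≤ u → u ≤ T → max (-(f i u + J u)) 0 ≤ Fi i := by
    intro J hJnn i u h0 h1
    have h2 := hJnn u h0 h1
    have h3 := hfle i u h0 h1
    have h4 : -(f i u) ≤ |f i u| := by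
      rcases abs_cases (f i u) with ⟨he, _⟩ | ⟨he, _⟩ <;> linarith
    exact max_le (by linarith) (hFi0 i)
  have gBdd : ∀ (J : ℝ → ℝ), (∀ t, 0 ≤ t → t ≤ T → 0 ≤ J t) → ∀ i, ∀ a : ℝ, 0 ≤ a → a ≤ T →
      BddAbove ((fun u => max (-(f i u + J u)) 0) '' Icc 0 a) := by
    intro J hJnn i a h0 h1
    refine ⟨Fi i, ?_⟩
    rintro x ⟨u, ⟨hu0, hua⟩, rfl⟩
    exact gbound J hJnn i u hu0 (hua.trans h1)
  have gNe : ∀ (J : ℝ → ℝ), ∀ i : Fin n, ∀ a : ℝ, 0 ≤ a →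
      ((fun u => max (-(f i u + J u)) 0) '' Icc 0 a).Nonempty :=
    fun J i a h0 => ⟨_, ⟨0, ⟨le_rfl, h0⟩, rfl⟩⟩
  -- the slope functions
  set Am : ℝ → ℝ := fun a =>
    K / (n:ℝ) * ∑ i, sSup ((fun u => max (-(f i u + Jm u)) 0) '' Icc 0 a) with hAmdef
  set Al : ℝ → ℝ := fun a =>
    K / (n:ℝ) * ∑ i, sSup ((fun u => max (-(f i u + Jl u)) 0) '' Icc 0 a) with hAldef
  have hAm_nonneg : ∀ a, 0 ≤ Am a := by
    intro a
    rw [hAmdef]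
    apply mul_nonneg hKn
    apply Finset.sum_nonneg
    intro i _
    apply Real.sSup_nonneg
    rintro x ⟨u, _, rfl⟩
    exact le_max_right _ _
  have hAm_mono : ∀ a b : ℝ, 0 ≤ a → a ≤ b → b ≤ T → Am a ≤ Am b := by
    intro a b ha hab hbT
    rw [hAmdef]
    apply mul_le_mul_of_nonneg_left _ hKn
    apply Finset.sum_le_sum
    intro i _
    exact csSup_le_csSup (gBdd Jm hJmnn i b (ha.trans hab) hbT) (gNe Jm i a ha)
      (image_mono (Icc_subset_Icc le_rfl hab))
  have hAm_le : ∀ a : ℝ, 0 ≤ a → a ≤ T → Am a ≤ K / (n:ℝ) * F := by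
    intro a ha haT
    rw [hAmdef]
    apply mul_le_mul_of_nonneg_left _ hKn
    apply Finset.sum_le_sum
    intro i _
    apply csSup_le (gNe Jm i a ha)
    rintro x ⟨u, ⟨h0, h1⟩, rfl⟩
    exact gbound Jm hJmnn i u h0 (h1.trans haT)
  have hJm0 : Jm 0 = 0 := hJm.1 0 ⟨le_rfl, le_min hδ.le hT.le⟩
  have hJl0 : Jl 0 = 0 := hJl.1 0 ⟨le_rfl, le_min hε.le hT.le⟩
  have hA0 : ∀ (J : ℝ → ℝ), J 0 = 0 →
      K / (n:ℝ) * ∑ i, sSup ((fun u => max (-(f i u + J u)) 0) '' Icc 0 (0:ℝ)) = 0 := by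
    intro J hJ0
    have h : ∀ i : Fin n, sSup ((fun u => max (-(f i u + J u)) 0) '' Icc 0 (0:ℝ)) = 0 := by
      intro i
      rw [Icc_self, image_singleton, csSup_singleton, hJ0, add_zero]
      exact max_eq_right (neg_nonpos.mpr (hf0 i))
    rw [Finset.sum_eq_zero fun i _ => h i, mul_zero]
  have hAm0 : Am 0 = 0 := by rw [hAmdef]; exact hA0 Jm hJm0
  have hAl0 : Al 0 = 0 := by rw [hAldef]; exact hA0 Jl hJl0
  -- step formulas on the fine grid
  have hJm_step : ∀ k : ℕ, ∀ t, (k:ℝ) * δ ≤ t → t ≤ ((k:ℝ) + 1) * δ → t ≤ T →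
      Jm t = Jm ((k:ℝ) * δ) + Am ((k:ℝ) * δ) * (t - (k:ℝ) * δ) := by
    intro k t h1 h2 h3
    rcases Nat.eq_zero_or_pos k with hk | hk
    · subst hk
      push_cast at h1 h2 ⊢
      rw [zero_mul] at *
      rw [hJm.1 t ⟨h1, le_min (by linarith) h3⟩, hJm0, hAm0]
      ring
    · have ht0 : (0:ℝ) ≤ t := le_trans (by positivity) h1
      have := hJm.2 k hk t ⟨⟨h1, h2⟩, ⟨ht0, h3⟩⟩
      rw [this, hAmdef]
  have hJl_step : ∀ k : ℕ, ∀ t, (k:ℝ) * δ ≤ t → t ≤ ((k:ℝ) + 1) * δ → t ≤ T →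
      Jl t = Jl ((k:ℝ) * δ) + Al (((k / r * r : ℕ) : ℝ) * δ) * (t - (k:ℝ) * δ) := by
    intro k t h1 h2 h3
    have hk0 : (0:ℝ) ≤ (k:ℝ) * δ := by positivity
    have ht0 : (0:ℝ) ≤ t := le_trans hk0 h1
    rcases Nat.lt_or_ge k r with hk | hk
    · have hdiv : k / r = 0 := Nat.div_eq_of_lt hk
      have hkr : ((k:ℝ)+1) ≤ (r:ℝ) := by exact_mod_cast Nat.succ_le_of_lt hk
      have htε : t ≤ ε := by nlinarith [hδ.le]
      have hkδε : (k:ℝ) * δ ≤ ε := le_trans h1 htε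
      rw [hJl.1 t ⟨ht0, le_min htε h3⟩, hJl.1 ((k:ℝ)*δ) ⟨hk0, le_min hkδε (h1.trans h3)⟩, hdiv]
      norm_num [hAl0]
    · set M := k / r with hMdef
      have hM1 : 1 ≤ M := (Nat.one_le_div_iff (by omega)).mpr hk
      have hMε_eq : ((M * r : ℕ) : ℝ) * δ = (M:ℝ) * ε := by push_cast; rw [← hrδ]; ring
      have hMε_le : (M:ℝ) * ε ≤ (k:ℝ) * δ := by
        rw [← hMε_eq]
        have h5 : (M * r : ℕ) ≤ k := Nat.div_mul_le_self k r
        have h6 : ((M * r : ℕ) : ℝ) ≤ (k:ℝ) := by exact_mod_cast h5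
        nlinarith [hδ.le]
      have hk1_le : ((k:ℝ)+1) * δ ≤ ((M:ℝ)+1) * ε := by
        rw [← hrδ]
        have h5 : (k + 1 : ℕ) ≤ (M+1) * r :=
          (Nat.div_lt_iff_lt_mul (show 0 < r by omega)).mp (Nat.lt_succ_self (k / r))
        have h6 : ((k:ℝ) + 1) ≤ ((M:ℝ)+1) * (r:ℝ) := by exact_mod_cast h5
        nlinarith [hδ.le]
      have hmem_t : t ∈ Icc ((M:ℝ)*ε) (((M:ℝ)+1)*ε) ∩ Icc (0:ℝ) T :=
        ⟨⟨le_trans hMε_le h1, le_trans h2 hk1_le⟩, ⟨ht0, h3⟩⟩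
      have hmem_k : (k:ℝ)*δ ∈ Icc ((M:ℝ)*ε) (((M:ℝ)+1)*ε) ∩ Icc (0:ℝ) T :=
        ⟨⟨hMε_le, le_trans (le_trans h1 h2) hk1_le⟩, ⟨hk0, le_trans h1 h3⟩⟩
      have e1 := hJl.2 M hM1 t hmem_t
      have e2 := hJl.2 M hM1 ((k:ℝ)*δ) hmem_k
      rw [hAldef]
      simp only
      rw [hMε_eq]
      linear_combination e1 - e2
  -- increments of Am along the coarse grid
  set c : ℕ → ℝ := fun k =>
    max (Am (min ((k:ℝ)*δ) T) - Am (min (((k / r * r : ℕ):ℝ) * δ) T)) 0 with hcdef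
  have hc0 : ∀ j, 0 ≤ c j := fun j => le_max_right _ _
  set ψ : ℕ → ℝ := euGron (1 + δ*K) δ c with hψdef
  have ha1 : (1:ℝ) ≤ 1 + δ*K := by nlinarith [hδ.le]
  have hψ0 : ∀ k, 0 ≤ ψ k := euGron_nonneg ha1 hδ.le hc0
  have hψmono : ∀ k, ψ k ≤ ψ (k+1) := euGron_mono ha1 hδ.le hc0
  have hψsucc : ∀ k, ψ (k+1) = (1 + δ*K) * ψ k + δ * c k := fun k => rfl
  -- slope comparison
  have slope_cmp : ∀ k : ℕ, (k:ℝ)*δ ≤ T →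
      (∀ u, 0 ≤ u → u ≤ (k:ℝ)*δ → |Jl u - Jm u| ≤ ψ k) →
      |Al (((k / r * r : ℕ):ℝ) * δ) - Am ((k:ℝ)*δ)| ≤ K * ψ k + c k := by
    intro k hkT hP
    set a : ℝ := ((k / r * r : ℕ):ℝ) * δ with hadef
    have ha0 : 0 ≤ a := by rw [hadef]; positivity
    have hak : a ≤ (k:ℝ)*δ := by
      rw [hadef]
      have h5 : (k / r * r : ℕ) ≤ k := Nat.div_mul_le_self k r
      have h6 := (Nat.cast_le (α := ℝ)).mpr h5
      nlinarith [hδ.le]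
    have haT : a ≤ T := hak.trans hkT
    have hψk : 0 ≤ ψ k := hψ0 k
    have hsup : ∀ i : Fin n,
        |sSup ((fun u => max (-(f i u + Jl u)) 0) '' Icc 0 a) -
         sSup ((fun u => max (-(f i u + Jm u)) 0) '' Icc 0 a)| ≤ ψ k := by
      intro i
      have hbl := gBdd Jl hJlnn i a ha0 haT
      have hbm := gBdd Jm hJmnn i a ha0 haT
      have h1 : sSup ((fun u => max (-(f i u + Jl u)) 0) '' Icc 0 a) ≤
          sSup ((fun u => max (-(f i u + Jm u)) 0) '' Icc 0 a) + ψ k := by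
        apply csSup_le (gNe Jl i a ha0)
        rintro x ⟨u, ⟨hu0, hua⟩, rfl⟩
        have hd := abs_le.mp (hP u hu0 (hua.trans hak))
        have hm : max (-(f i u + Jm u)) 0 ≤
            sSup ((fun u => max (-(f i u + Jm u)) 0) '' Icc 0 a) :=
          le_csSup hbm ⟨u, ⟨hu0, hua⟩, rfl⟩
        have h0m : (0:ℝ) ≤ max (-(f i u + Jm u)) 0 := le_max_right _ _
        apply max_le
        · have := le_max_left (-(f i u + Jm u)) (0:ℝ)
          linarith [hd.1, hd.2]
        · linarith
      have h2 : sSup ((fun u => max (-(f i u + Jm u)) 0) '' Icc 0 a) ≤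
          sSup ((fun u => max (-(f i u + Jl u)) 0) '' Icc 0 a) + ψ k := by
        apply csSup_le (gNe Jm i a ha0)
        rintro x ⟨u, ⟨hu0, hua⟩, rfl⟩
        have hd := abs_le.mp (hP u hu0 (hua.trans hak))
        have hm : max (-(f i u + Jl u)) 0 ≤
            sSup ((fun u => max (-(f i u + Jl u)) 0) '' Icc 0 a) :=
          le_csSup hbl ⟨u, ⟨hu0, hua⟩, rfl⟩
        have h0m : (0:ℝ) ≤ max (-(f i u + Jl u)) 0 := le_max_right _ _
        apply max_le
        · have := le_max_left (-(f i u + Jl u)) (0:ℝ)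
          linarith [hd.1, hd.2]
        · linarith
      rw [abs_le]
      constructor <;> linarith
    have hAlAm : |Al a - Am a| ≤ K * ψ k := by
      rw [hAldef, hAmdef]
      simp only
      rw [← mul_sub, ← Finset.sum_sub_distrib, abs_mul, abs_of_nonneg hKn]
      calc K / ↑n * |∑ i, (sSup ((fun u => max (-(f i u + Jl u)) 0) '' Icc 0 a) -
              sSup ((fun u => max (-(f i u + Jm u)) 0) '' Icc 0 a))|
          ≤ K / ↑n * ∑ i, |sSup ((fun u => max (-(f i u + Jl u)) 0) '' Icc 0 a) -
              sSup ((fun u => max (-(f i u + Jm u)) 0) '' Icc 0 a)| :=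
            mul_le_mul_of_nonneg_left (Finset.abs_sum_le_sum_abs _ _) hKn
        _ ≤ K / ↑n * ∑ _i : Fin n, ψ k :=
            mul_le_mul_of_nonneg_left (Finset.sum_le_sum fun i _ => hsup i) hKn
        _ = K * ψ k := by
            rw [Finset.sum_const, Finset.card_univ, Fintype.card_fin, nsmul_eq_mul]
            field_simp
    have h2a : Am a ≤ Am ((k:ℝ)*δ) := hAm_mono a _ ha0 hak hkT
    have h2b : Am ((k:ℝ)*δ) - Am a ≤ c k := by
      rw [hcdef]
      simp only
      rw [min_eq_left hkT, ← hadef, min_eq_left haT]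
      exact le_max_left _ _
    have habs : |Am a - Am ((k:ℝ)*δ)| ≤ c k := by
      rw [abs_sub_comm, abs_of_nonneg (by linarith)]
      exact h2b
    calc |Al a - Am ((k:ℝ)*δ)| ≤ |Al a - Am a| + |Am a - Am ((k:ℝ)*δ)| :=
          abs_sub_le _ _ _
      _ ≤ K * ψ k + c k := add_le_add hAlAm habs
  -- the main induction
  have main : ∀ k : ℕ, ∀ t, 0 ≤ t → t ≤ (k:ℝ)*δ → t ≤ T → |Jl t - Jm t| ≤ ψ k := by
    intro k
    induction k with
    | zero =>
      intro t ht0 htk htT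
      have ht : t = 0 := le_antisymm (by simpa using htk) ht0
      rw [ht, hJl0, hJm0]
      simpa using hψ0 0
    | succ k ih =>
      intro t ht0 htk htT
      by_cases h : t ≤ (k:ℝ)*δ
      · exact le_trans (ih t ht0 h htT) (hψmono k)
      · push_neg at h
        have hkT : (k:ℝ)*δ ≤ T := le_trans h.le htT
        have hd0 := ih ((k:ℝ)*δ) (by positivity) le_rfl hkT
        have hsc := slope_cmp k hkT (fun u hu0 hu1 => ih u hu0 hu1 (hu1.trans hkT))
        have htk' : t ≤ ((k:ℝ)+1) * δ := by push_cast at htk; linarith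
        have el := hJl_step k t h.le htk' htT
        have em := hJm_step k t h.le htk' htT
        rw [el, em]
        have heq : Jl ((k:ℝ)*δ) + Al (((k / r * r : ℕ):ℝ) * δ) * (t - (k:ℝ)*δ) -
            (Jm ((k:ℝ)*δ) + Am ((k:ℝ)*δ) * (t - (k:ℝ)*δ)) =
            (Jl ((k:ℝ)*δ) - Jm ((k:ℝ)*δ)) +
            (Al (((k / r * r : ℕ):ℝ) * δ) - Am ((k:ℝ)*δ)) * (t - (k:ℝ)*δ) := by ring
        rw [heq]
        have htd : t - (k:ℝ)*δ ≤ δ := by push_cast at htk; linarith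
        have htd0 : 0 ≤ t - (k:ℝ)*δ := by linarith
        have habs2 := abs_nonneg (Al (((k / r * r : ℕ):ℝ) * δ) - Am ((k:ℝ)*δ))
        calc |(Jl ((k:ℝ)*δ) - Jm ((k:ℝ)*δ)) +
              (Al (((k / r * r : ℕ):ℝ) * δ) - Am ((k:ℝ)*δ)) * (t - (k:ℝ)*δ)|
            ≤ |Jl ((k:ℝ)*δ) - Jm ((k:ℝ)*δ)| +
              |Al (((k / r * r : ℕ):ℝ) * δ) - Am ((k:ℝ)*δ)| * (t - (k:ℝ)*δ) := by
              refine le_trans (abs_add_le _ _) ?_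
              rw [abs_mul, abs_of_nonneg htd0]
          _ ≤ ψ (k+1) := by
              rw [hψsucc k]
              nlinarith
  -- bound on the accumulated increments
  have hb : 0 ≤ K / (n:ℝ) * F := mul_nonneg hKn hF0
  have hc_le : ∀ j : ℕ, c j ≤ Am (min ((j:ℝ)*δ) T) - Am (min (((j+1-r:ℕ):ℝ)*δ) T) := by
    intro j
    have hnat1 : (j+1-r : ℕ) ≤ j / r * r := by
      have h1 : j < (j / r + 1) * r :=
        (Nat.div_lt_iff_lt_mul (show 0 < r by omega)).mp (Nat.lt_succ_self (j / r))
      rw [Nat.succ_mul] at h1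
      obtain ⟨A, hA⟩ : ∃ A, j / r * r = A := ⟨_, rfl⟩
      rw [hA] at h1 ⊢
      omega
    have hnat2 : (j+1-r : ℕ) ≤ j := by omega
    have harg1 : ((j+1-r:ℕ):ℝ)*δ ≤ ((j / r * r:ℕ):ℝ)*δ := by
      have := (Nat.cast_le (α := ℝ)).mpr hnat1
      nlinarith [hδ.le]
    have harg2 : ((j+1-r:ℕ):ℝ)*δ ≤ (j:ℝ)*δ := by
      have := (Nat.cast_le (α := ℝ)).mpr hnat2
      nlinarith [hδ.le]
    have hmono1 : Am (min (((j+1-r:ℕ):ℝ)*δ) T) ≤ Am (min (((j/r*r:ℕ):ℝ)*δ) T) :=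
      hAm_mono _ _ (le_min (by positivity) hT.le) (min_le_min_right T harg1) (min_le_right _ _)
    have hmono2 : Am (min (((j+1-r:ℕ):ℝ)*δ) T) ≤ Am (min ((j:ℝ)*δ) T) :=
      hAm_mono _ _ (le_min (by positivity) hT.le) (min_le_min_right T harg2) (min_le_right _ _)
    rw [hcdef]
    simp only
    exact max_le (by linarith) (by linarith)
  have hSsum : ∀ k : ℕ, δ * ∑ j ∈ Finset.range k, c j ≤ ε * (K/(n:ℝ) * F) := by
    intro k
    have hv_le : ∀ j : ℕ, Am (min ((j:ℝ)*δ) T) ≤ K/(n:ℝ) * F :=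
      fun j => hAm_le _ (le_min (by positivity) hT.le) (min_le_right _ _)
    have hv0 : ∀ j : ℕ, 0 ≤ Am (min ((j:ℝ)*δ) T) := fun j => hAm_nonneg _
    have step1 : ∑ j ∈ Finset.range k, c j ≤
        ∑ j ∈ Finset.range k, (Am (min ((j:ℝ)*δ) T) - Am (min (((j+1-r:ℕ):ℝ)*δ) T)) :=
      Finset.sum_le_sum fun j _ => hc_le j
    have step2 : ∑ j ∈ Finset.range (k - (r-1)), Am (min ((j:ℝ)*δ) T) ≤
        ∑ j ∈ Finset.range k, Am (min (((j+1-r:ℕ):ℝ)*δ) T) := by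
      have himage : ∑ j ∈ (Finset.range (k - (r-1))).image (· + (r-1)),
          Am (min (((j+1-r:ℕ):ℝ)*δ) T) =
          ∑ j ∈ Finset.range (k - (r-1)), Am (min ((j:ℝ)*δ) T) := by
        rw [Finset.sum_image (by intro x _ y _ h; simp only at h; omega)]
        apply Finset.sum_congr rfl
        intro j _
        rw [show j + (r-1) + 1 - r = j from by omega]
      rw [← himage]
      apply Finset.sum_le_sum_of_subset_of_nonneg
      · intro j hj
        simp only [Finset.mem_image, Finset.mem_range] at hj ⊢
        obtain ⟨x, hx, rfl⟩ := hj
        omega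
      · intro j _ _
        exact hAm_nonneg _
    have step3 : ∑ j ∈ Finset.range k,
        (Am (min ((j:ℝ)*δ) T) - Am (min (((j+1-r:ℕ):ℝ)*δ) T)) =
        ∑ j ∈ Finset.range k, Am (min ((j:ℝ)*δ) T) -
        ∑ j ∈ Finset.range k, Am (min (((j+1-r:ℕ):ℝ)*δ) T) := Finset.sum_sub_distrib _ _
    have step4 : ∑ j ∈ Finset.Ico (k-(r-1)) k, Am (min ((j:ℝ)*δ) T) =
        ∑ j ∈ Finset.range k, Am (min ((j:ℝ)*δ) T) -
        ∑ j ∈ Finset.range (k-(r-1)), Am (min ((j:ℝ)*δ) T) :=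
      Finset.sum_Ico_eq_sub _ (Nat.sub_le _ _)
    have step5 : ∑ j ∈ Finset.Ico (k-(r-1)) k, Am (min ((j:ℝ)*δ) T) ≤
        ((Finset.Ico (k-(r-1)) k).card : ℝ) * (K/(n:ℝ) * F) := by
      have := Finset.sum_le_card_nsmul (Finset.Ico (k-(r-1)) k)
        (fun j => Am (min ((j:ℝ)*δ) T)) (K/(n:ℝ) * F) (fun j _ => hv_le j)
      rwa [nsmul_eq_mul] at this
    have hcard : ((Finset.Ico (k-(r-1)) k).card : ℝ) ≤ (r:ℝ) - 1 := by
      rw [Nat.card_Ico]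
      have : k - (k - (r-1)) ≤ r - 1 := by omega
      have h7 : ((k - (k - (r-1)) : ℕ) : ℝ) ≤ ((r - 1 : ℕ) : ℝ) := by exact_mod_cast this
      have h8 : ((r - 1 : ℕ) : ℝ) = (r:ℝ) - 1 := by
        push_cast [Nat.cast_sub hr1]
        ring
      linarith
    have hSig : ∑ j ∈ Finset.range k, c j ≤ ((r:ℝ) - 1) * (K/(n:ℝ) * F) := by
      have h9 : ∑ j ∈ Finset.Ico (k-(r-1)) k, Am (min ((j:ℝ)*δ) T) ≤
          ((r:ℝ) - 1) * (K/(n:ℝ) * F) := by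
        refine le_trans step5 ?_
        exact mul_le_mul_of_nonneg_right hcard hb
      linarith
    calc δ * ∑ j ∈ Finset.range k, c j ≤ δ * (((r:ℝ) - 1) * (K/(n:ℝ) * F)) := by
          apply mul_le_mul_of_nonneg_left hSig hδ.le
      _ ≤ ε * (K/(n:ℝ) * F) := by nlinarith [hδ.le, hb, mul_nonneg hδ.le hb, hrδ]
  -- pointwise final bound
  have pointbd : ∀ t, 0 ≤ t → t ≤ T →
      |Jl t - Jm t| ≤ Real.exp (K*T) * (ε * (K/(n:ℝ) * F)) := by
    intro t ht0 htT
    have hRHS0 : 0 ≤ Real.exp (K*T) * (ε * (K/(n:ℝ) * F)) :=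
      mul_nonneg (Real.exp_pos _).le (mul_nonneg hε.le hb)
    have htk : t ≤ ((⌈t / δ⌉₊ : ℝ))*δ := by
      have h1 := Nat.le_ceil (t/δ)
      exact (div_le_iff₀ hδ).mp h1
    have hmain := main ⌈t/δ⌉₊ t ht0 htk htT
    rcases Nat.eq_zero_or_pos ⌈t/δ⌉₊ with hk0 | hk1
    · rw [hk0] at hmain
      refine le_trans hmain ?_
      have : ψ 0 = 0 := rfl
      rw [this]
      exact hRHS0
    · obtain ⟨k', hkk⟩ : ∃ k', ⌈t/δ⌉₊ = k' + 1 := ⟨⌈t/δ⌉₊ - 1, by omega⟩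
      rw [hkk] at hmain
      have hk'T : (k':ℝ)*δ ≤ T := by
        have h1 : (k' : ℝ) < t/δ := Nat.lt_ceil.mp (by omega)
        have h2 := (lt_div_iff₀ hδ).mp h1
        linarith
      have hb1 := euGron_le ha1 hδ.le hc0 k'
      have hb2 := hSsum (k'+1)
      have hb3 : (1+δ*K)^k' ≤ Real.exp (K*T) := by
        have h1 : (1+δ*K) ≤ Real.exp (δ*K) := by linarith [Real.add_one_le_exp (δ*K)]
        have h2 : (1+δ*K)^k' ≤ (Real.exp (δ*K))^k' := pow_le_pow_left₀ (by nlinarith [hδ.le]) h1 k'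
        have h3 : (Real.exp (δ*K))^k' = Real.exp ((k':ℝ)*(δ*K)) := (Real.exp_nat_mul _ k').symm
        have h4 : (k':ℝ)*(δ*K) ≤ K*T := by nlinarith [hδ.le, Nat.cast_nonneg (α := ℝ) k']
        calc (1+δ*K)^k' ≤ (Real.exp (δ*K))^k' := h2
          _ = Real.exp ((k':ℝ)*(δ*K)) := h3
          _ ≤ Real.exp (K*T) := Real.exp_le_exp.mpr h4
      have hεb : 0 ≤ ε * (K/(n:ℝ) * F) := mul_nonneg hε.le hb
      have hpow0 : 0 ≤ (1+δ*K)^k' := pow_nonneg (by nlinarith [hδ.le]) k'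
      calc |Jl t - Jm t| ≤ ψ (k'+1) := hmain
        _ ≤ (1+δ*K)^k' * (δ * ∑ j ∈ Finset.range (k'+1), c j) := hb1
        _ ≤ (1+δ*K)^k' * (ε * (K/(n:ℝ) * F)) := mul_le_mul_of_nonneg_left hb2 hpow0
        _ ≤ Real.exp (K*T) * (ε * (K/(n:ℝ) * F)) := mul_le_mul_of_nonneg_right hb3 hεb
  -- conclusion
  have hRHS0 : 0 ≤ (2 + K) * F / (n:ℝ) * ε * Real.exp (K*T) := by
    have h1 : 0 ≤ (2+K) * F / (n:ℝ) := div_nonneg (mul_nonneg (by linarith) hF0) hn0.le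
    have := (Real.exp_pos (K*T)).le
    positivity
  apply Real.sSup_le _ hRHS0
  rintro x ⟨t, ⟨ht0, htT⟩, rfl⟩
  have hkey : K/(n:ℝ) * F ≤ (2+K) * F / (n:ℝ) := by
    rw [div_mul_eq_mul_div]
    exact (div_le_div_iff_of_pos_right hn0).mpr (by nlinarith)
  calc |Jl t - Jm t| ≤ Real.exp (K*T) * (ε * (K/(n:ℝ) * F)) := pointbd t ht0 htT
    _ ≤ Real.exp (K*T) * (ε * ((2+K) * F / (n:ℝ))) := by
        apply mul_le_mul_of_nonneg_left _ (Real.exp_pos (K*T)).le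
        exact mul_le_mul_of_nonneg_left hkey hε.le
    _ = (2 + K) * F / (n:ℝ) * ε * Real.exp (K*T) := by ring
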